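/- Let G be a finite simple graph obtained from a connected bipartite graph G' (with bipartition classes V_1 ⊔ V_2) by adding two new edges e = {1,2} and e' = {3,4}, where 1,2 ∈ V_1 and 3,4 ∈ V_2 and {1,3},{2,4} ∈ E(G'). Then: (a) every even cycle of G containing e or e' contains both e and e'; and (b) every odd cycle of G contains e or e'. -/

import Mathlib

/-- Let `G'` be a connected bipartite graph with bipartition given by a 2-coloring `c`,
let `v₁, v₂` be distinct vertices in one class and `w₁, w₂` distinct vertices in the
other class with `{v₁,w₁}, {v₂,w₂} ∈ E(G')`, and let `G` be obtained from `G'` by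
adding the edges `e = {v₁,v₂}` and `e' = {w₁,w₂}`. Then:
(a) every even cycle of `G` containing `e` or `e'` contains both; and
(b) every odd cycle of `G` contains `e` or `e'`. -/
theorem stmt8 {V : Type*} (G' : SimpleGraph V) (hconn : G'.Connected)
    (c : V → Bool) (hc : ∀ {x y : V}, G'.Adj x y → c x ≠ c y)
    (v₁ v₂ w₁ w₂ : V)
    (hv₁ : c v₁ = true) (hv₂ : c v₂ = true)
    (hw₁ : c w₁ = false) (hw₂ : c w₂ = false)
    (hv : v₁ ≠ v₂) (hw : w₁ ≠ w₂)
    (h13 : G'.Adj v₁ w₁) (h24 : G'.Adj v₂ w₂)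
    (G : SimpleGraph V)
    (hG : G = G' ⊔ SimpleGraph.fromEdgeSet {s(v₁, v₂), s(w₁, w₂)}) :
    (∀ (u : V) (w : G.Walk u u), w.IsCycle → Even w.length →
      (s(v₁, v₂) ∈ w.edges ∨ s(w₁, w₂) ∈ w.edges) →
      (s(v₁, v₂) ∈ w.edges ∧ s(w₁, w₂) ∈ w.edges)) ∧
    (∀ (u : V) (w : G.Walk u u), w.IsCycle → Odd w.length →
      (s(v₁, v₂) ∈ w.edges ∨ s(w₁, w₂) ∈ w.edges)) := by
  classical
  subst hG
  set e : Sym2 V := s(v₁, v₂) with he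
  set e' : Sym2 V := s(w₁, w₂) with he'
  have hne : e ≠ e' := by
    intro h
    rw [he, he', Sym2.eq_iff] at h
    rcases h with ⟨h1, _⟩ | ⟨h1, _⟩ <;> rw [h1] at hv₁ <;> simp_all
  have key : ∀ {a b : V} (p : (G' ⊔ SimpleGraph.fromEdgeSet {e, e'}).Walk a b),
      (c a = c b ↔ Even (p.length + (p.edges.count e + p.edges.count e'))) := by
    intro a b p
    induction p with
    | nil => simp
    | @cons a x b h q ih =>
      rw [SimpleGraph.sup_adj, SimpleGraph.fromEdgeSet_adj] at h
      simp only [SimpleGraph.Walk.length_cons, SimpleGraph.Walk.edges_cons]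
      rcases h with h | ⟨hmem, hax⟩
      · have hca : c a ≠ c x := hc h
        have h1 : s(a, x) ≠ e := by
          intro hh
          rw [he, Sym2.eq_iff] at hh
          rcases hh with ⟨ha, hx⟩ | ⟨ha, hx⟩ <;> rw [ha, hx] at hca <;>
            rw [hv₁, hv₂] at hca <;> exact hca rfl
        have h2 : s(a, x) ≠ e' := by
          intro hh
          rw [he', Sym2.eq_iff] at hh
          rcases hh with ⟨ha, hx⟩ | ⟨ha, hx⟩ <;> rw [ha, hx] at hca <;>
            rw [hw₁, hw₂] at hca <;> exact hca rfl
        rw [List.count_cons_of_ne h1, List.count_cons_of_ne h2]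
        have harr : q.length + 1 + (q.edges.count e + q.edges.count e')
            = (q.length + (q.edges.count e + q.edges.count e')) + 1 := by omega
        rw [harr, Nat.even_add_one, ← ih]
        cases hA : c a <;> cases hX : c x <;> cases hB : c b <;> simp_all
      · rw [Set.mem_insert_iff, Set.mem_singleton_iff] at hmem
        rcases hmem with hme | hme
        · have hcax : c a = c x := by
            rw [he, Sym2.eq_iff] at hme
            rcases hme with ⟨ha, hx⟩ | ⟨ha, hx⟩ <;> rw [ha, hx, hv₁, hv₂]
          have h2 : s(a, x) ≠ e' := hme ▸ hne
          rw [hme, List.count_cons_self, List.count_cons_of_ne hne]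
          have harr : q.length + 1 + (q.edges.count e + 1 + q.edges.count e')
              = (q.length + (q.edges.count e + q.edges.count e')) + 2 := by omega
          rw [harr, hcax, ih]
          simp [Nat.even_add_one, parity_simps]
        · have hcax : c a = c x := by
            rw [he', Sym2.eq_iff] at hme
            rcases hme with ⟨ha, hx⟩ | ⟨ha, hx⟩ <;> rw [ha, hx, hw₁, hw₂]
          have h1 : s(a, x) ≠ e := hme ▸ hne.symm
          rw [hme, List.count_cons_self, List.count_cons_of_ne hne.symm]
          have harr : q.length + 1 + (q.edges.count e + (q.edges.count e' + 1))
              = (q.length + (q.edges.count e + q.edges.count e')) + 2 := by omega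
          rw [harr, hcax, ih]
          simp [Nat.even_add_one, parity_simps]
  have main : ∀ (u : V) (w : (G' ⊔ SimpleGraph.fromEdgeSet {e, e'}).Walk u u),
      w.IsCycle →
      (Even w.length ↔ Even (w.edges.count e + w.edges.count e')) := by
    intro u w hcyc
    have h := (key w).mp rfl
    rw [Nat.even_add] at h
    exact h
  constructor
  · intro u w hcyc heven hor
    have hnodup := hcyc.edges_nodup
    have h1 := List.Nodup.count hnodup (a := e)
    have h2 := List.Nodup.count hnodup (a := e')
    have hpar := (main u w hcyc).mp heven
    by_contra hcon
    push_neg at hcon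
    rcases hor with hm | hm
    · have hnm : e' ∉ w.edges := fun hh => (hcon hm hh).elim
      rw [if_pos hm] at h1
      rw [if_neg hnm] at h2
      rw [h1, h2] at hpar
      simp at hpar
    · have hnm : e ∉ w.edges := by
        intro hh; exact (hcon hh hm).elim
      rw [if_neg hnm] at h1
      rw [if_pos hm] at h2
      rw [h1, h2] at hpar
      simp at hpar
  · intro u w hcyc hodd
    have hnodup := hcyc.edges_nodup
    have h1 := List.Nodup.count hnodup (a := e)
    have h2 := List.Nodup.count hnodup (a := e')
    have hpar := main u w hcyc
    by_contra hcon
    push_neg at hcon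
    rw [if_neg hcon.1] at h1
    rw [if_neg hcon.2] at h2
    rw [h1, h2] at hpar
    simp at hpar
    exact (Nat.not_even_iff_odd.mpr hodd) hpar
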